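/- For a ≥ 2, the maximum, over x ∈ ℕ such that the set Λ^x \ ⋃_{x'≠x} Λ^{x'} is nonempty, of the minimum ν-value on that set, ranges exactly over the set {z : 1 ≤ z ≤ a} ∪ {z(a+1) : 1 ≤ z ≤ a}; i.e., the set of minimal ν-values of nonempty 'parabolas' equals {1, 2, ..., a} ∪ {a+1, 2(a+1), ..., a(a+1)}. -/
import Mathlib


def Lam (a : ℕ) : Set ℕ := {n | ∃ i j : ℕ, n = i * a + j * (a + 1)}

noncomputable def nu (a l : ℕ) : ℕ := {m | m ∈ Lam a ∧ ∃ k ∈ Lam a, m + k = l}.ncard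

def LamX (a x : ℕ) : Set ℕ := {n | ∃ y ≤ x, n = a * x + y}

/-- `Λ^x \ ⋃_{x' ≠ x} Λ^{x'}`. -/
def UX (a x : ℕ) : Set ℕ := LamX a x \ {n | ∃ x', x' ≠ x ∧ n ∈ LamX a x'}

lemma mem_Lam_iff {a : ℕ} (ha : 1 ≤ a) (n : ℕ) :
    n ∈ Lam a ↔ ∃ q r : ℕ, r ≤ q ∧ r < a ∧ n = q * a + r := by
  constructor
  · rintro ⟨i, j, rfl⟩
    refine ⟨i + j + j / a, j % a,
      (Nat.mod_le j a).trans ((Nat.le_add_left j i).trans (Nat.le_add_right _ _)),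
      Nat.mod_lt _ ha, ?_⟩
    have h := Nat.div_add_mod j a
    ring_nf at h ⊢
    omega
  · rintro ⟨q, r, h1, h2, rfl⟩
    obtain ⟨d, rfl⟩ := Nat.le.dest h1
    exact ⟨d, r, by ring⟩

lemma nu_formula {a x y : ℕ} (ha : 2 ≤ a) (hyx : y ≤ x) (hya : y < a) (hxy : x ≤ y + a) :
    nu a (a * x + y) = (y + 1) * (x - y + 1) := by
  have ha1 : 1 ≤ a := by omega
  have hset : {m | m ∈ Lam a ∧ ∃ k ∈ Lam a, m + k = a * x + y} =
      ↑((Finset.range (y + 1) ×ˢ Finset.range (x - y + 1)).image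
        (fun p => (p.1 + p.2) * a + p.1)) := by
    ext m
    simp only [Set.mem_setOf_eq, Finset.coe_image, Set.mem_image, Finset.mem_coe,
      Finset.mem_product, Finset.mem_range]
    constructor
    · rintro ⟨hm, k, hk, hmk⟩
      rw [mem_Lam_iff ha1] at hm hk
      obtain ⟨α, β, hβα, hβa, rfl⟩ := hm
      obtain ⟨γ, δ, hδγ, hδa, rfl⟩ := hk
      -- (α + γ) * a + (β + δ) = x * a + y
      have hkey : α + γ = x ∧ β + δ = y := by
        have e1 : α * a + β + (γ * a + δ) = (α + γ) * a + (β + δ) := by ring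
        have e2 : a * x + y = x * a + y := by ring
        rcases Nat.lt_trichotomy (α + γ) x with h | h | h
        · rcases Nat.lt_or_ge (α + γ + 1) x with h' | h'
          · have : (α + γ) * a + a + a ≤ x * a := by
              calc (α + γ) * a + a + a = (α + γ + 2) * a := by ring
              _ ≤ x * a := Nat.mul_le_mul_right a (by omega)
            omega
          · -- α + γ + 1 = x, so β + δ = y + a
            have hx1 : α + γ + 1 = x := by omega
            have : (α + γ + 1) * a = (α + γ) * a + a := by ring
            rw [hx1] at this
            -- β + δ = y + a then, derive contradiction
            have hbd : β + δ = y + a := by omega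
            omega
        · constructor
          · exact h
          · have : (α + γ) * a = x * a := by rw [h]
            omega
        · have : x * a + a ≤ (α + γ) * a := by
            calc x * a + a = (x + 1) * a := by ring
            _ ≤ (α + γ) * a := Nat.mul_le_mul_right a h
          omega
      refine ⟨(β, α - β), ⟨by omega, by omega⟩, by simp; omega⟩
    · rintro ⟨⟨β, t⟩, ⟨hβ, ht⟩, rfl⟩
      simp only at *
      refine ⟨?_, (x - β - t) * a + (y - β), ?_, ?_⟩
      · rw [mem_Lam_iff ha1]
        exact ⟨β + t, β, by omega, by omega, rfl⟩
      · rw [mem_Lam_iff ha1]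
        exact ⟨x - β - t, y - β, by omega, by omega, rfl⟩
      · have e : (β + t) + (x - β - t) = x := by omega
        calc (β + t) * a + β + ((x - β - t) * a + (y - β))
            = ((β + t) + (x - β - t)) * a + (β + (y - β)) := by ring
          _ = x * a + y := by rw [e]; congr 1; omega
          _ = a * x + y := by ring
  rw [nu, hset, Set.ncard_coe_finset]
  rw [Finset.card_image_of_injOn, Finset.card_product, Finset.card_range, Finset.card_range]
  rintro ⟨β, t⟩ hp ⟨β', t'⟩ hq h
  simp only [Finset.mem_coe, Finset.mem_product, Finset.mem_range] at hp hq h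
  have hb : β = β' := by
    have h1 : (β + (β + t) * a) % a = (β' + (β' + t') * a) % a := by
      congr 1; omega
    rw [Nat.add_mul_mod_self_right, Nat.add_mul_mod_self_right] at h1
    rw [Nat.mod_eq_of_lt (by omega), Nat.mod_eq_of_lt (by omega)] at h1
    exact h1
  subst hb
  have : (β + t) * a = (β + t') * a := by omega
  have := Nat.eq_of_mul_eq_mul_right (by omega : 0 < a) this
  simp_all

lemma mem_LamX_iff {a x n : ℕ} : n ∈ LamX a x ↔ a * x ≤ n ∧ n ≤ (a + 1) * x := by
  have h : (a + 1) * x = a * x + x := by ring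
  constructor
  · rintro ⟨y, hy, rfl⟩; omega
  · rintro ⟨h1, h2⟩; exact ⟨n - a * x, by omega, by omega⟩

lemma mem_UX_iff {a x : ℕ} (ha : 2 ≤ a) (n : ℕ) :
    n ∈ UX a x ↔ ∃ y, y ≤ x ∧ y < a ∧ x ≤ y + a ∧ n = a * x + y := by
  constructor
  · rintro ⟨⟨y, hy, rfl⟩, hnot⟩
    simp only [Set.mem_setOf_eq, not_exists, not_and] at hnot
    refine ⟨y, hy, ?_, ?_, rfl⟩
    · by_contra hya
      push_neg at hya
      refine hnot (x + 1) (by omega) (mem_LamX_iff.mpr ⟨?_, ?_⟩)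
      · have : a * (x + 1) = a * x + a := by ring
        omega
      · have : (a + 1) * (x + 1) = a * x + x + a + 1 := by ring
        omega
    · by_contra hxa
      push_neg at hxa
      refine hnot (x - 1) (by omega) (mem_LamX_iff.mpr ⟨?_, ?_⟩)
      · have : a * (x - 1) ≤ a * x := Nat.mul_le_mul_left a (by omega)
        omega
      · have e1 : (a + 1) * (x - 1) + (a + 1) = (a + 1) * x := by
          rw [← Nat.mul_succ]; congr 1; omega
        have e2 : (a + 1) * x = a * x + x := by ring
        omega
  · rintro ⟨y, hy, hya, hxy, rfl⟩
    constructor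
    · exact ⟨y, hy, rfl⟩
    · rintro ⟨x', hne, hx'⟩
      rw [mem_LamX_iff] at hx'
      rcases Nat.lt_or_ge x' x with h | h
      · have e1 : (a + 1) * x' + (a + 1) ≤ (a + 1) * x := by
          calc (a + 1) * x' + (a + 1) = (a + 1) * (x' + 1) := by ring
          _ ≤ (a + 1) * x := Nat.mul_le_mul_left _ (by omega)
        have e2 : (a + 1) * x = a * x + x := by ring
        omega
      · have e1 : a * x + a ≤ a * x' := by
          calc a * x + a = a * (x + 1) := by ring
          _ ≤ a * x' := Nat.mul_le_mul_left _ (by omega)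
        omega

lemma UX_nonempty {a x : ℕ} (ha : 2 ≤ a) (hx : x < 2 * a) : (UX a x).Nonempty :=
  ⟨a * x + (x - a), (mem_UX_iff ha _).mpr ⟨x - a, by omega, by omega, by omega, rfl⟩⟩

lemma sInf_lt {a x : ℕ} (ha : 2 ≤ a) (hx : x < a) :
    sInf (nu a '' UX a x) = x + 1 := by
  have hmem : x + 1 ∈ nu a '' UX a x := by
    refine ⟨a * x + 0, (mem_UX_iff ha _).mpr ⟨0, by omega, by omega, by omega, rfl⟩, ?_⟩
    rw [nu_formula ha (by omega) (by omega) (by omega)]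
    omega
  refine le_antisymm (Nat.sInf_le hmem) (le_csInf ⟨_, hmem⟩ ?_)
  rintro b ⟨n, hn, rfl⟩
  rw [mem_UX_iff ha] at hn
  obtain ⟨y, hy, hya, hxy, rfl⟩ := hn
  rw [nu_formula ha hy hya hxy]
  obtain ⟨c, hc⟩ := Nat.le.dest hy
  have hxc : x - y = c := by omega
  rw [hxc]
  nlinarith

lemma sInf_ge {a x : ℕ} (ha : 2 ≤ a) (hx1 : a ≤ x) (hx2 : x < 2 * a) :
    sInf (nu a '' UX a x) = (x - a + 1) * (a + 1) := by
  have hmem : (x - a + 1) * (a + 1) ∈ nu a '' UX a x := by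
    refine ⟨a * x + (x - a), (mem_UX_iff ha _).mpr ⟨x - a, by omega, by omega, by omega, rfl⟩, ?_⟩
    rw [nu_formula ha (by omega) (by omega) (by omega)]
    congr 1
    omega
  refine le_antisymm (Nat.sInf_le hmem) (le_csInf ⟨_, hmem⟩ ?_)
  rintro b ⟨n, hn, rfl⟩
  rw [mem_UX_iff ha] at hn
  obtain ⟨y, hy, hya, hxy, rfl⟩ := hn
  rw [nu_formula ha hy hya hxy]
  obtain ⟨p, rfl⟩ := Nat.le.dest hx1  -- x = a + p
  have hp : p ≤ y := by omega
  obtain ⟨u, rfl⟩ := Nat.le.dest hp  -- y = p + u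
  have e1 : a + p - a = p := by omega
  have e2 : a + p - (p + u) = a - u := by omega
  rw [e1, e2]
  have hu : u < a := by omega
  obtain ⟨v, hv⟩ := Nat.le.dest (le_of_lt hu)  -- a = u + v
  have e3 : a - u = v := by omega
  rw [e3, ← hv]
  have hpv : p + 1 ≤ v := by omega
  nlinarith [Nat.mul_le_mul_left u hpv]

theorem stmt17 (a : ℕ) (ha : 2 ≤ a) :
    {v : ℕ | ∃ x : ℕ, (UX a x).Nonempty ∧ v = sInf (nu a '' UX a x)} =
      {v : ℕ | 1 ≤ v ∧ v ≤ a} ∪ {v : ℕ | ∃ z, 1 ≤ z ∧ z ≤ a ∧ v = z * (a + 1)} := by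
  ext v
  simp only [Set.mem_setOf_eq, Set.mem_union]
  constructor
  · rintro ⟨x, hne, rfl⟩
    rcases Nat.lt_or_ge x a with hx | hx
    · left; rw [sInf_lt ha hx]; omega
    rcases Nat.lt_or_ge x (2 * a) with hx2 | hx2
    · right
      refine ⟨x - a + 1, by omega, by omega, ?_⟩
      rw [sInf_ge ha hx hx2]
    · exfalso
      obtain ⟨n, hn⟩ := hne
      rw [mem_UX_iff ha] at hn
      obtain ⟨y, _, _, _, _⟩ := hn
      omega
  · rintro (⟨h1, h2⟩ | ⟨z, h1, h2, rfl⟩)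
    · exact ⟨v - 1, UX_nonempty ha (by omega), by rw [sInf_lt ha (by omega)]; omega⟩
    · refine ⟨a + z - 1, UX_nonempty ha (by omega), ?_⟩
      rw [sInf_ge ha (by omega) (by omega)]
      congr 1
      omega
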